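/- Let A ⊇ B ⊇ C be a left relative H-separable tower (with data e_i ∈ (B ⊗_C A)^B, d_i ∈ D = A^C, 1 ⊗ 1 = Σ e_i¹ ⊗ e_i² d_i). If there is a C-C-bimodule projection E : B → C with E(1) = 1 (B ⊇ C is a split extension), then D = A^C is a separable extension of R = A^B; explicitly Σ_i E(e_i¹) e_i² ⊗_R d_i is a separability element for D ⊇ R. -/

import Mathlib

/-!  A noncommutative relative tensor product `L ⊗_C R` for a ring `C` mapping
into rings `L` (acting on the right through `f`) and `R` (acting on the left
through `g`), together with the outer left `L`-action `lact`, the outer right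
`R`-action `ract`, a lifting principle for balanced biadditive maps, and the
multiplication map. -/

open scoped TensorProduct

noncomputable section
namespace NCT

variable {C L R : Type*} [Ring C] [Ring L] [Ring R]

/-- The submodule of relations `(l * f c) ⊗ r - l ⊗ (g c * r)`. -/
def rel (f : C →+* L) (g : C →+* R) : Submodule ℤ (L ⊗[ℤ] R) :=
  Submodule.span ℤ
    {x | ∃ (l : L) (c : C) (r : R), x = (l * f c) ⊗ₜ[ℤ] r - l ⊗ₜ[ℤ] (g c * r)}

/-- The relative tensor product `L ⊗_C R`. -/
def Tens (f : C →+* L) (g : C →+* R) : Type _ := (L ⊗[ℤ] R) ⧸ rel f g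

instance (f : C →+* L) (g : C →+* R) : AddCommGroup (Tens f g) :=
  inferInstanceAs (AddCommGroup ((L ⊗[ℤ] R) ⧸ rel f g))

variable (f : C →+* L) (g : C →+* R)

/-- The canonical image of `l ⊗ r` in `L ⊗_C R`. -/
def tmul (l : L) (r : R) : Tens f g := Submodule.Quotient.mk (l ⊗ₜ[ℤ] r)

lemma tmul_rel (l : L) (c : C) (r : R) :
    tmul f g (l * f c) r = tmul f g l (g c * r) := by
  refine (Submodule.Quotient.eq _).2 ?_
  exact Submodule.subset_span ⟨l, c, r, rfl⟩

lemma tmul_add_left (l l' : L) (r : R) :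
    tmul f g (l + l') r = tmul f g l r + tmul f g l' r := by
  show Submodule.Quotient.mk _ = _
  rw [TensorProduct.add_tmul, Submodule.Quotient.mk_add]; rfl

lemma tmul_add_right (l : L) (r r' : R) :
    tmul f g l (r + r') = tmul f g l r + tmul f g l r' := by
  show Submodule.Quotient.mk _ = _
  rw [TensorProduct.tmul_add, Submodule.Quotient.mk_add]; rfl

/-- Package a biadditive map as a bundled `AddMonoidHom`-valued hom. -/
def mkBilin {M N P : Type*} [AddCommGroup M] [AddCommGroup N] [AddCommGroup P]
    (φ : M → N → P)
    (h1 : ∀ m m' n, φ (m + m') n = φ m n + φ m' n)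
    (h2 : ∀ m n n', φ m (n + n') = φ m n + φ m n') : M →+ N →+ P :=
  AddMonoidHom.mk' (fun m => AddMonoidHom.mk' (φ m) (h2 m))
    (fun m m' => by ext n; exact h1 m m' n)

@[simp] lemma mkBilin_apply {M N P : Type*} [AddCommGroup M] [AddCommGroup N] [AddCommGroup P]
    (φ : M → N → P) (h1 h2) (m : M) (n : N) : mkBilin φ h1 h2 m n = φ m n := rfl

/-- Lift a balanced biadditive map to the relative tensor product. -/
def lift {P : Type*} [AddCommGroup P] (φ : L →+ R →+ P)
    (hbal : ∀ l c r, φ (l * f c) r = φ l (g c * r)) : Tens f g →+ P :=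
  (Submodule.liftQ (rel f g)
    (TensorProduct.liftAddHom φ (by
      intro n l r
      simp only [AddMonoidHom.map_zsmul, AddMonoidHom.smul_apply]) ).toIntLinearMap
    (by
      rw [rel, Submodule.span_le]
      rintro x ⟨l, c, r, rfl⟩
      simp only [SetLike.mem_coe, LinearMap.mem_ker, AddMonoidHom.coe_toIntLinearMap,
        map_sub, TensorProduct.liftAddHom_tmul]
      rw [hbal, sub_self])).toAddMonoidHom

@[simp] lemma lift_tmul {P : Type*} [AddCommGroup P] (φ : L →+ R →+ P)
    (hbal : ∀ l c r, φ (l * f c) r = φ l (g c * r)) (l : L) (r : R) :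
    lift f g φ hbal (tmul f g l r) = φ l r := rfl

/-- The outer left action of `L` on `L ⊗_C R`. -/
def lact (l : L) : Tens f g →+ Tens f g :=
  lift f g (mkBilin (fun l' r => tmul f g (l * l') r)
      (fun a b r => by rw [mul_add, tmul_add_left])
      (fun a r s => by rw [tmul_add_right]))
    (fun l' c r => by simp only [mkBilin_apply]; rw [← mul_assoc, tmul_rel])

@[simp] lemma lact_tmul (l l' : L) (r : R) :
    lact f g l (tmul f g l' r) = tmul f g (l * l') r := rfl

/-- The outer right action of `R` on `L ⊗_C R`. -/
def ract (r : R) : Tens f g →+ Tens f g :=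
  lift f g (mkBilin (fun l' r' => tmul f g l' (r' * r))
      (fun a b r' => by rw [tmul_add_left])
      (fun a r' s => by rw [add_mul, tmul_add_right]))
    (fun l' c r' => by simp only [mkBilin_apply]; rw [tmul_rel, mul_assoc])

@[simp] lemma ract_tmul (r r' : R) (l : L) :
    ract f g r (tmul f g l r') = tmul f g l (r' * r) := rfl

/-- The map induced on relative tensor products by a ring map on the left factor. -/
def mapLeft {L' : Type*} [Ring L'] (h : L →+* L') :
    Tens f g →+ Tens (h.comp f) g :=
  lift f g (mkBilin (fun l r => tmul (h.comp f) g (h l) r)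
      (fun a b r => by rw [map_add, tmul_add_left])
      (fun a r s => by rw [tmul_add_right]))
    (fun l c r => by
      simp only [mkBilin_apply, map_mul]
      exact tmul_rel (h.comp f) g (h l) c r)

@[simp] lemma mapLeft_tmul {L' : Type*} [Ring L'] (h : L →+* L') (l : L) (r : R) :
    mapLeft f g h (tmul f g l r) = tmul (h.comp f) g (h l) r := rfl

/-- The multiplication map `L ⊗_C R → R`, `l ⊗ r ↦ jl l * r`, for a ring map
`jl : L → R` compatible with the two maps from `C`. -/
def mulMap (jl : L →+* R) (hcomp : ∀ c, jl (f c) = g c) : Tens f g →+ R :=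
  lift f g (mkBilin (fun l r => jl l * r)
      (fun a b r => by rw [map_add, add_mul])
      (fun a r s => by rw [mul_add]))
    (fun l c r => by simp only [mkBilin_apply]; rw [map_mul, hcomp, mul_assoc])

@[simp] lemma mulMap_tmul (jl : L →+* R) (hcomp : ∀ c, jl (f c) = g c) (l : L) (r : R) :
    mulMap f g jl hcomp (tmul f g l r) = jl l * r := rfl

/-- Induction principle: every element of `L ⊗_C R` is built from `tmul`s. -/
lemma tens_induction {p : Tens f g → Prop} (zero : p 0)
    (tm : ∀ l r, p (tmul f g l r)) (add : ∀ x y, p x → p y → p (x + y)) :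
    ∀ x, p x := by
  intro x
  obtain ⟨y, rfl⟩ := Submodule.Quotient.mk_surjective _ x
  induction y using TensorProduct.induction_on with
  | zero => exact zero
  | tmul l r => exact tm l r
  | add a b ha hb =>
      rw [Submodule.Quotient.mk_add]
      exact add _ _ ha hb

end NCT
end

noncomputable section
open NCT

/-- The tower `A ⊇ B ⊇ C` (given by injective ring maps `ι : C → B`, `j : B → A`) is
*left relative H-separable*: `B ⊗_C A ⊕ * ≅ A^n` as `B`-`A`-bimodules. -/
def LeftRelHSep {C B A : Type*} [Ring C] [Ring B] [Ring A]
    (ι : C →+* B) (j : B →+* A) (n : ℕ) : Prop :=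
  ∃ (i : Tens ι (j.comp ι) →+ (Fin n → A)) (p : (Fin n → A) →+ Tens ι (j.comp ι)),
    (∀ (b : B) x, i (lact ι (j.comp ι) b x) = fun k => j b * i x k) ∧
    (∀ (a : A) x, i (ract ι (j.comp ι) a x) = fun k => i x k * a) ∧
    (∀ (b : B) v, p (fun k => j b * v k) = lact ι (j.comp ι) b (p v)) ∧
    (∀ (a : A) v, p (fun k => v k * a) = ract ι (j.comp ι) a (p v)) ∧
    ∀ x, p (i x) = x

/-- `B` is a *left relative separable extension of `C` in `A`*: the multiplication map
`μ : B ⊗_C A → A` splits as a `B`-`A`-bimodule epimorphism. -/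
def LeftRelSep {C B A : Type*} [Ring C] [Ring B] [Ring A]
    (ι : C →+* B) (j : B →+* A) : Prop :=
  ∃ σ : A →+ Tens ι (j.comp ι),
    (∀ (b : B) (a : A), σ (j b * a) = lact ι (j.comp ι) b (σ a)) ∧
    (∀ (a a' : A), σ (a * a') = ract ι (j.comp ι) a' (σ a)) ∧
    ∀ a, mulMap ι (j.comp ι) j (fun _ => rfl) (σ a) = a

/-- `B ⊇ C` is a separable extension: there is a `B`-central element
`e ∈ B ⊗_C B` with `μ(e) = 1`. -/
def IsSepExt {C B : Type*} [Ring C] [Ring B] (ι : C →+* B) : Prop :=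
  ∃ e : Tens ι ι, (∀ b : B, lact ι ι b e = ract ι ι b e) ∧
    mulMap ι ι (RingHom.id B) (fun _ => rfl) e = 1

/-- The map `B ⊗_C A → A`, `b ⊗ a ↦ (ιE(b))·a`, induced by a `C`-`C`-bimodule
projection `E : B → C`. -/
def EE {C B A : Type*} [Ring C] [Ring B] [Ring A] (ι : C →+* B) (j : B →+* A)
    (E : B →+ C)
    (hEbil : ∀ (c : C) (b : B) (c' : C), E (ι c * b * ι c') = c * E b * c') :
    Tens ι (j.comp ι) →+ A :=
  lift ι (j.comp ι)
    (mkBilin (fun b a => j (ι (E b)) * a)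
      (fun x y a => by rw [map_add, map_add, map_add, add_mul])
      (fun x a a' => by rw [mul_add]))
    (fun b c a => by
      dsimp only [mkBilin_apply]
      have hE : E (b * ι c) = E b * c := by simpa using hEbil 1 b c
      rw [hE, map_mul, map_mul, mul_assoc]
      rfl)

/-! ### Auxiliary lemmas for the proof -/

namespace NCT

section Generic
variable {C L R : Type*} [Ring C] [Ring L] [Ring R] (f : C →+* L) (g : C →+* R)

lemma tmul_zero_right (l : L) : tmul f g l 0 = 0 := by
  show Submodule.Quotient.mk _ = _
  rw [TensorProduct.tmul_zero]
  rfl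

lemma ract_zero_scalar (x : Tens f g) : ract f g 0 x = 0 := by
  induction x using tens_induction with
  | zero => exact map_zero _
  | tm l r => rw [ract_tmul, mul_zero, tmul_zero_right]
  | add a b ha hb => rw [map_add, ha, hb, add_zero]

lemma ract_add_scalar (r r' : R) (x : Tens f g) :
    ract f g (r + r') x = ract f g r x + ract f g r' x := by
  induction x using tens_induction with
  | zero => simp only [map_zero, add_zero]
  | tm l s => rw [ract_tmul, ract_tmul, ract_tmul, mul_add, tmul_add_right]
  | add a b ha hb =>
      rw [map_add, ha, hb, map_add, map_add]
      abel

lemma ract_ract (r r' : R) (x : Tens f g) :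
    ract f g r (ract f g r' x) = ract f g (r' * r) x := by
  induction x using tens_induction with
  | zero => simp only [map_zero]
  | tm l s => rw [ract_tmul, ract_tmul, ract_tmul, mul_assoc]
  | add a b ha hb => rw [map_add, map_add, ha, hb, map_add]

lemma lact_ract_comm (l : L) (r : R) (x : Tens f g) :
    lact f g l (ract f g r x) = ract f g r (lact f g l x) := by
  induction x using tens_induction with
  | zero => simp only [map_zero]
  | tm l' r' => rw [ract_tmul, lact_tmul, lact_tmul, ract_tmul]
  | add a b ha hb => rw [map_add, map_add, ha, hb, map_add, map_add]

/-- `tmul` with fixed right argument, as an additive hom. -/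
def tmulL (r : R) : L →+ Tens f g :=
  AddMonoidHom.mk' (fun l => tmul f g l r) (fun a b => tmul_add_left f g a b r)

@[simp] lemma tmulL_apply (r : R) (l : L) : tmulL f g r l = tmul f g l r := rfl

/-- `tmul` with fixed left argument, as an additive hom. -/
def tmulR (l : L) : R →+ Tens f g :=
  AddMonoidHom.mk' (tmul f g l) (tmul_add_right f g l)

@[simp] lemma tmulR_apply (l : L) (r : R) : tmulR f g l r = tmul f g l r := rfl

end Generic

section Tower
variable {C B A : Type*} [Ring C] [Ring B] [Ring A] (ι : C →+* B) (j : B →+* A)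

/-- Middle multiplication `b ⊗ a ↦ b ⊗ (d * a)` by an element `d` of the
centralizer of `C` in `A`. -/
def midMul (d : A) (hd : ∀ c : C, j (ι c) * d = d * j (ι c)) :
    Tens ι (j.comp ι) →+ Tens ι (j.comp ι) :=
  lift ι (j.comp ι)
    (mkBilin (fun b a => tmul ι (j.comp ι) b (d * a))
      (fun x y a => by rw [tmul_add_left])
      (fun x a a' => by rw [mul_add, tmul_add_right]))
    (fun b c a => by
      simp only [mkBilin_apply]
      rw [tmul_rel]
      congr 1
      show (j (ι c)) * (d * a) = d * (j (ι c) * a)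
      rw [← mul_assoc, hd c, mul_assoc])

@[simp] lemma midMul_tmul (d : A) (hd : ∀ c : C, j (ι c) * d = d * j (ι c)) (b : B) (a : A) :
    midMul ι j d hd (tmul ι (j.comp ι) b a) = tmul ι (j.comp ι) b (d * a) := rfl

lemma midMul_lact (d : A) (hd : ∀ c : C, j (ι c) * d = d * j (ι c)) (b : B)
    (x : Tens ι (j.comp ι)) :
    midMul ι j d hd (lact ι (j.comp ι) b x) = lact ι (j.comp ι) b (midMul ι j d hd x) := by
  induction x using tens_induction with
  | zero => simp only [map_zero]
  | tm b' a => rw [lact_tmul, midMul_tmul, midMul_tmul, lact_tmul]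
  | add u v hu hv => rw [map_add, map_add, hu, hv, map_add, map_add]

lemma midMul_ract (d : A) (hd : ∀ c : C, j (ι c) * d = d * j (ι c)) (a : A)
    (x : Tens ι (j.comp ι)) :
    midMul ι j d hd (ract ι (j.comp ι) a x) = ract ι (j.comp ι) a (midMul ι j d hd x) := by
  induction x using tens_induction with
  | zero => simp only [map_zero]
  | tm b' a' => rw [ract_tmul, midMul_tmul, midMul_tmul, ract_tmul, mul_assoc]
  | add u v hu hv => rw [map_add, map_add, hu, hv, map_add, map_add]

/-- The map `b ⊗ a ↦ j(b) * d * a` for `d` in the centralizer of `C` in `A`. -/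
def WW (d : A) (hd : ∀ c : C, j (ι c) * d = d * j (ι c)) :
    Tens ι (j.comp ι) →+ A :=
  lift ι (j.comp ι)
    (mkBilin (fun b a => j b * d * a)
      (fun x y a => by rw [map_add, add_mul, add_mul])
      (fun x a a' => by rw [mul_add]))
    (fun b c a => by
      simp only [mkBilin_apply]
      show j (b * ι c) * d * a = j b * d * (j (ι c) * a)
      rw [map_mul, mul_assoc (j b), hd c, ← mul_assoc, ← mul_assoc, mul_assoc (j b * d)])

@[simp] lemma WW_tmul (d : A) (hd : ∀ c : C, j (ι c) * d = d * j (ι c)) (b : B) (a : A) :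
    WW ι j d hd (tmul ι (j.comp ι) b a) = j b * d * a := rfl

lemma WW_lact (d : A) (hd : ∀ c : C, j (ι c) * d = d * j (ι c)) (b : B)
    (x : Tens ι (j.comp ι)) :
    WW ι j d hd (lact ι (j.comp ι) b x) = j b * WW ι j d hd x := by
  induction x using tens_induction with
  | zero => simp only [map_zero, mul_zero]
  | tm b' a => simp only [lact_tmul, WW_tmul, map_mul, mul_assoc]
  | add u v hu hv => simp only [map_add, hu, hv, mul_add]

lemma WW_ract (d : A) (hd : ∀ c : C, j (ι c) * d = d * j (ι c)) (a : A)
    (x : Tens ι (j.comp ι)) :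
    WW ι j d hd (ract ι (j.comp ι) a x) = WW ι j d hd x * a := by
  induction x using tens_induction with
  | zero => simp only [map_zero, zero_mul]
  | tm b' a' => simp only [ract_tmul, WW_tmul, mul_assoc]
  | add u v hu hv => simp only [map_add, hu, hv, add_mul]

variable (E : B →+ C)
  (hEbil : ∀ (c : C) (b : B) (c' : C), E (ι c * b * ι c') = c * E b * c')

@[simp] lemma EE_tmul (b : B) (a : A) :
    EE ι j E hEbil (tmul ι (j.comp ι) b a) = j (ι (E b)) * a := rfl

lemma EE_lactc (c : C) (x : Tens ι (j.comp ι)) :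
    EE ι j E hEbil (lact ι (j.comp ι) (ι c) x) = j (ι c) * EE ι j E hEbil x := by
  induction x using tens_induction with
  | zero => simp only [map_zero, mul_zero]
  | tm b a =>
      rw [lact_tmul, EE_tmul, EE_tmul]
      have hE : E (ι c * b) = c * E b := by simpa using hEbil c b 1
      rw [hE, map_mul, map_mul, mul_assoc]
  | add u v hu hv => simp only [map_add, hu, hv, mul_add]

lemma EE_ract (a : A) (x : Tens ι (j.comp ι)) :
    EE ι j E hEbil (ract ι (j.comp ι) a x) = EE ι j E hEbil x * a := by
  induction x using tens_induction with
  | zero => simp only [map_zero, zero_mul]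
  | tm b a' => simp only [ract_tmul, EE_tmul, mul_assoc]
  | add u v hu hv => simp only [map_add, hu, hv, add_mul]

lemma EE_midMul (d : A) (hd : ∀ c : C, j (ι c) * d = d * j (ι c))
    (x : Tens ι (j.comp ι)) :
    EE ι j E hEbil (midMul ι j d hd x) = d * EE ι j E hEbil x := by
  induction x using tens_induction with
  | zero => simp only [map_zero, mul_zero]
  | tm b a => rw [midMul_tmul, EE_tmul, EE_tmul, ← mul_assoc, hd (E b), mul_assoc]
  | add u v hu hv => simp only [map_add, hu, hv, mul_add]

end Tower

end NCT

/-- given a left relative H-separable tower `A ⊇ B ⊇ C` (with data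
`e_i ∈ (B ⊗_C A)^B`, `d_i ∈ D = A^C`, `1 ⊗ 1 = Σ e_i¹ ⊗ e_i² d_i`) and a `C`-`C`-bimodule
projection `E : B → C`, the element `Σ E(e_i¹) e_i² ⊗_R d_i` is a separability element
for `D ⊇ R`; in particular `D` is a separable extension of `R = A^B`. -/
theorem centralizer_separable_of_split
    {C B A : Type*} [Ring C] [Ring B] [Ring A]
    (ι : C →+* B) (j : B →+* A)
    (hι : Function.Injective ι) (hj : Function.Injective j)
    (hRD : Subring.centralizer (Set.range j) ≤ Subring.centralizer (Set.range (j.comp ι)))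
    (n : ℕ) (e : Fin n → Tens ι (j.comp ι)) (d : Fin n → A)
    (hd : ∀ k, d k ∈ Subring.centralizer (Set.range (j.comp ι)))
    (hcent : ∀ (k : Fin n) (b : B),
      lact ι (j.comp ι) b (e k) = ract ι (j.comp ι) (j b) (e k))
    (hdecomp : tmul ι (j.comp ι) 1 1 = ∑ k, ract ι (j.comp ι) (d k) (e k))
    (E : B →+ C) (hEproj : ∀ c : C, E (ι c) = c)
    (hEbil : ∀ (c : C) (b : B) (c' : C), E (ι c * b * ι c') = c * E b * c') :
    ∃ hmem : ∀ k, EE ι j E hEbil (e k) ∈ Subring.centralizer (Set.range (j.comp ι)),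
      ∃ f : Tens (Subring.inclusion hRD) (Subring.inclusion hRD),
        f = ∑ k, tmul (Subring.inclusion hRD) (Subring.inclusion hRD)
              ⟨EE ι j E hEbil (e k), hmem k⟩ ⟨d k, hd k⟩ ∧
        (∀ dd : ↥(Subring.centralizer (Set.range (j.comp ι))),
          lact (Subring.inclusion hRD) (Subring.inclusion hRD) dd f =
          ract (Subring.inclusion hRD) (Subring.inclusion hRD) dd f) ∧
        mulMap (Subring.inclusion hRD) (Subring.inclusion hRD)
          (RingHom.id _) (fun _ => rfl) f = 1 := by
  classical
  have coe_incl : ∀ (x : ↥(Subring.centralizer (Set.range j))),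
      ((Subring.inclusion hRD x : ↥(Subring.centralizer (Set.range (j.comp ι)))) : A)
        = (x : A) := fun _ => rfl
  have hd' : ∀ (a : A), a ∈ Subring.centralizer (Set.range (j.comp ι)) →
      ∀ c : C, j (ι c) * a = a * j (ι c) :=
    fun a ha c => Subring.mem_centralizer_iff.mp ha _ ⟨c, rfl⟩
  have hdc : ∀ k, ∀ c : C, j (ι c) * d k = d k * j (ι c) := fun k => hd' _ (hd k)
  have hmem : ∀ k, EE ι j E hEbil (e k) ∈ Subring.centralizer (Set.range (j.comp ι)) := by
    intro k
    rw [Subring.mem_centralizer_iff]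
    rintro _ ⟨c, rfl⟩
    show j (ι c) * _ = _ * j (ι c)
    rw [← EE_lactc, hcent k (ι c), EE_ract]
  -- the key expansion identity : every x equals ∑ l, (x^{(l)}) ⋅ e_l
  have key : ∀ x : Tens ι (j.comp ι),
      x = ∑ l, ract ι (j.comp ι) (WW ι j (d l) (hdc l) x) (e l) := by
    intro x
    induction x using tens_induction with
    | zero => simp only [map_zero, ract_zero_scalar, Finset.sum_const_zero]
    | tm b a =>
        have h1 : tmul ι (j.comp ι) b a
            = lact ι (j.comp ι) b (ract ι (j.comp ι) a (tmul ι (j.comp ι) 1 1)) := by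
          rw [ract_tmul, lact_tmul, one_mul, mul_one]
        simp only [WW_tmul]
        rw [h1, hdecomp, map_sum, map_sum]
        refine Finset.sum_congr rfl fun l _ => ?_
        rw [ract_ract, lact_ract_comm, hcent l b, ract_ract, mul_assoc]
    | add u v hu hv =>
        calc u + v = (∑ l, ract ι (j.comp ι) (WW ι j (d l) (hdc l) u) (e l))
              + ∑ l, ract ι (j.comp ι) (WW ι j (d l) (hdc l) v) (e l) := by
                rw [← hu, ← hv]
          _ = _ := by
              rw [← Finset.sum_add_distrib]
              exact Finset.sum_congr rfl fun l _ => by rw [map_add, ract_add_scalar]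
  refine ⟨hmem, _, rfl, ?_, ?_⟩
  · -- the Casimir (D-centrality) property
    intro dd
    have hddc : ∀ c : C, j (ι c) * (dd : A) = (dd : A) * j (ι c) := hd' _ dd.2
    have hexp : ∀ k, (dd : A) * EE ι j E hEbil (e k)
        = ∑ l, EE ι j E hEbil (e l) *
            WW ι j (d l) (hdc l) (midMul ι j (dd : A) hddc (e k)) := by
      intro k
      rw [← EE_midMul (hd := hddc)]
      conv_lhs => rw [key (midMul ι j (dd : A) hddc (e k))]
      rw [map_sum]
      exact Finset.sum_congr rfl fun l _ => EE_ract ι j E hEbil _ _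
    have memρ : ∀ l k, WW ι j (d l) (hdc l) (midMul ι j (dd : A) hddc (e k))
        ∈ Subring.centralizer (Set.range j) := by
      intro l k
      rw [Subring.mem_centralizer_iff]
      rintro _ ⟨b, rfl⟩
      rw [← WW_lact, ← midMul_lact, hcent k b, midMul_ract, WW_ract]
    have sum_rho : ∀ l, ∑ k, WW ι j (d l) (hdc l) (midMul ι j (dd : A) hddc (e k)) * d k
        = d l * (dd : A) := by
      intro l
      have h2 : ∀ k, WW ι j (d l) (hdc l) (midMul ι j (dd : A) hddc (e k)) * d k
          = WW ι j (d l) (hdc l)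
              (midMul ι j (dd : A) hddc (ract ι (j.comp ι) (d k) (e k))) := by
        intro k; rw [midMul_ract, WW_ract]
      calc ∑ k, WW ι j (d l) (hdc l) (midMul ι j (dd : A) hddc (e k)) * d k
          = ∑ k, WW ι j (d l) (hdc l)
              (midMul ι j (dd : A) hddc (ract ι (j.comp ι) (d k) (e k))) :=
            Finset.sum_congr rfl fun k _ => h2 k
        _ = WW ι j (d l) (hdc l)
              (midMul ι j (dd : A) hddc (∑ k, ract ι (j.comp ι) (d k) (e k))) := by
            rw [map_sum, map_sum]
        _ = d l * (dd : A) := by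
            rw [← hdecomp, midMul_tmul, WW_tmul, map_one, one_mul, mul_one]
    have hleft : ∀ k, (dd * ⟨EE ι j E hEbil (e k), hmem k⟩ :
          ↥(Subring.centralizer (Set.range (j.comp ι))))
        = ∑ l, (⟨EE ι j E hEbil (e l), hmem l⟩ :
              ↥(Subring.centralizer (Set.range (j.comp ι)))) *
            Subring.inclusion hRD
              ⟨WW ι j (d l) (hdc l) (midMul ι j (dd : A) hddc (e k)), memρ l k⟩ := by
      intro k
      apply Subtype.ext
      push_cast
      simp only [coe_incl]
      exact hexp k
    rw [map_sum, map_sum]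
    calc ∑ k, lact (Subring.inclusion hRD) (Subring.inclusion hRD) dd
          (tmul (Subring.inclusion hRD) (Subring.inclusion hRD)
            ⟨EE ι j E hEbil (e k), hmem k⟩ ⟨d k, hd k⟩)
        = ∑ k, ∑ l, tmul (Subring.inclusion hRD) (Subring.inclusion hRD)
            ⟨EE ι j E hEbil (e l), hmem l⟩
            (Subring.inclusion hRD
              ⟨WW ι j (d l) (hdc l) (midMul ι j (dd : A) hddc (e k)), memρ l k⟩ *
              ⟨d k, hd k⟩) := by
          refine Finset.sum_congr rfl fun k _ => ?_
          rw [lact_tmul, hleft k, ← tmulL_apply, map_sum]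
          exact Finset.sum_congr rfl fun l _ => by rw [tmulL_apply, tmul_rel]
      _ = ∑ l, ∑ k, tmul (Subring.inclusion hRD) (Subring.inclusion hRD)
            ⟨EE ι j E hEbil (e l), hmem l⟩
            (Subring.inclusion hRD
              ⟨WW ι j (d l) (hdc l) (midMul ι j (dd : A) hddc (e k)), memρ l k⟩ *
              ⟨d k, hd k⟩) := Finset.sum_comm
      _ = ∑ l, ract (Subring.inclusion hRD) (Subring.inclusion hRD) dd
            (tmul (Subring.inclusion hRD) (Subring.inclusion hRD)
              ⟨EE ι j E hEbil (e l), hmem l⟩ ⟨d l, hd l⟩) := by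
          refine Finset.sum_congr rfl fun l _ => ?_
          have hms := (map_sum (tmulR (Subring.inclusion hRD) (Subring.inclusion hRD)
                (⟨EE ι j E hEbil (e l), hmem l⟩ :
                  ↥(Subring.centralizer (Set.range (j.comp ι)))))
              (fun k => Subring.inclusion hRD
                  ⟨WW ι j (d l) (hdc l) (midMul ι j (dd : A) hddc (e k)), memρ l k⟩ *
                ⟨d k, hd k⟩) Finset.univ).symm
          simp only [tmulR_apply] at hms
          rw [hms, ract_tmul]
          congr 1
          apply Subtype.ext
          push_cast
          simp only [coe_incl]
          exact sum_rho l
  · -- the multiplication property μ(f) = 1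
    have hE1 : E (1 : B) = (1 : C) := by rw [← map_one ι]; exact hEproj 1
    have h1 : (1 : A) = ∑ k, EE ι j E hEbil (e k) * d k := by
      have h0 := congrArg (EE ι j E hEbil) hdecomp
      rw [map_sum, EE_tmul, hE1, map_one, map_one, one_mul] at h0
      rw [h0]
      exact Finset.sum_congr rfl fun k _ => EE_ract ι j E hEbil _ _
    rw [map_sum]
    simp only [mulMap_tmul, RingHom.id_apply]
    apply Subtype.ext
    push_cast
    exact h1.symm

end
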